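/- Under the block-decomposition setup, the embedding of Ẽ (the completion of H with respect to ‖·‖_i) into E is compact: every sequence (x_p) with sup_p ‖x_p‖_i < ∞ admits a subsequence that converges in the norm of E. -/

import Mathlib

open MeasureTheory ProbabilityTheory Filter Topology NNReal ENNReal

/-- **Compactness of the embedding `Ẽ ↪ E`.** Under the block-decomposition setup, every
sequence `(x_p)` of elements of `Ẽ` (each given by a block expansion
`x_p = Σ_k Q_k x_p` with `Q_k x_p = Σ_{j=n_k+1}^{n_{k+1}} a_p(j) eⱼ`) with
`sup_p ‖x_p‖ᵢ < ∞` admits a subsequence converging in the norm of `E`. -/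
theorem embedding_intermediate_into_E_compact
    {E : Type*} [NormedAddCommGroup E] [NormedSpace ℝ E] [CompleteSpace E]
    [TopologicalSpace.SeparableSpace E] [MeasurableSpace E] [BorelSpace E]
    -- E is infinite dimensional
    (hEinf : ¬ FiniteDimensional ℝ E)
    -- μ is a centered Gaussian probability measure on E
    (μ : Measure E) [IsProbabilityMeasure μ]
    (hμ : ∀ ξ : E →L[ℝ] ℝ, ∃ v : ℝ≥0, μ.map ξ = gaussianReal 0 v)
    -- X is an E-valued random variable with law μ
    {Ω : Type*} [MeasurableSpace Ω] (P : Measure Ω) [IsProbabilityMeasure P]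
    (X : Ω → E) (hXm : Measurable X) (hXlaw : P.map X = μ)
    -- (gₙ) is an orthonormal basis of E'_μ: an i.i.d. sequence of N(0,1) random variables
    (g : ℕ → Ω → ℝ) (hgm : ∀ j, Measurable (g j))
    (hglaw : ∀ j, P.map (g j) = gaussianReal 0 1)
    (hgindep : iIndepFun g P)
    -- eₙ = E[X gₙ(X)] is the corresponding orthonormal system of the RKHS H
    (e : ℕ → E) (he : ∀ j, e j = ∫ ω, g j ω • X ω ∂P)
    -- the partial sums Xₙ = Σ_{j=1}^n gⱼ eⱼ converge a.s. and in L² to X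
    (hae : ∀ᵐ ω ∂P, Filter.Tendsto (fun m => ∑ j ∈ Finset.Ioc 0 m, g j ω • e j)
      Filter.atTop (𝓝 (X ω)))
    (hL2 : Filter.Tendsto (fun m => ∫ ω, ‖X ω - ∑ j ∈ Finset.Ioc 0 m, g j ω • e j‖ ^ 2 ∂P)
      Filter.atTop (𝓝 0))
    -- α > 0, and an increasing sequence (nₖ) with n₀ = 0 satisfying the tail bound
    (α : ℝ) (hα : 0 < α) (n : ℕ → ℕ) (hn : StrictMono n) (hn0 : n 0 = 0)
    (htail : ∀ k : ℕ, ∫ ω, ‖X ω - ∑ j ∈ Finset.Ioc 0 (n k), g j ω • e j‖ ^ 2 ∂P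
      ≤ (2 : ℝ) ^ (-(k : ℝ) * (3 + 2 * α)))
    (a : ℕ → ℕ → ℝ) (x : ℕ → E)
    (hrep : ∀ p, HasSum
      (fun k : ℕ => ∑ j ∈ Finset.Ioc (n k) (n (k + 1)), a p j • e j) (x p))
    (hbdd : ∃ M : ℝ, ∀ p,
      (∑' k : ℕ, ENNReal.ofReal ((2 : ℝ) ^ ((k : ℝ) * α) *
        ‖∑ j ∈ Finset.Ioc (n k) (n (k + 1)), a p j • e j‖)) ≤ ENNReal.ofReal M) :
    ∃ φ : ℕ → ℕ, StrictMono φ ∧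
      ∃ l : E, Filter.Tendsto (fun r => x (φ r)) Filter.atTop (𝓝 l) := by
  classical
  obtain ⟨M, hM⟩ := hbdd
  set y : ℕ → ℕ → E := fun p k => ∑ j ∈ Finset.Ioc (n k) (n (k + 1)), a p j • e j with hy
  set C : ℝ := max M 0 with hC
  have hC0 : (0:ℝ) ≤ C := le_max_right _ _
  set r : ℝ := (2 : ℝ) ^ (-α) with hr
  have hr0 : 0 < r := Real.rpow_pos_of_pos (by norm_num) _
  have hr1 : r < 1 := Real.rpow_lt_one_of_one_lt_of_neg (by norm_num) (by linarith)
  -- norm bound on blocks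
  have hbound : ∀ p k, ‖y p k‖ ≤ C * r ^ k := by
    intro p k
    have h1 : ENNReal.ofReal ((2:ℝ) ^ ((k:ℝ)*α) * ‖y p k‖) ≤ ENNReal.ofReal C := by
      refine le_trans (ENNReal.le_tsum k) (le_trans (hM p) ?_)
      exact ENNReal.ofReal_le_ofReal (le_max_left _ _)
    have h2 : (2:ℝ) ^ ((k:ℝ)*α) * ‖y p k‖ ≤ C :=
      (ENNReal.ofReal_le_ofReal_iff hC0).mp h1
    have ht : (0:ℝ) < (2:ℝ) ^ ((k:ℝ)*α) := Real.rpow_pos_of_pos (by norm_num) _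
    have h3 : ‖y p k‖ ≤ C / (2:ℝ) ^ ((k:ℝ)*α) := by
      rw [le_div_iff₀ ht]; nlinarith [h2]
    have h4 : C / (2:ℝ) ^ ((k:ℝ)*α) = C * r ^ k := by
      rw [div_eq_mul_inv, ← Real.rpow_neg (by norm_num : (0:ℝ) ≤ 2)]
      congr 1
      rw [hr, ← Real.rpow_natCast ((2:ℝ) ^ (-α)) k,
        ← Real.rpow_mul (by norm_num : (0:ℝ) ≤ 2)]
      ring_nf
    linarith [h3]
  -- finite-dimensional block subspaces
  set V : ℕ → Submodule ℝ E := fun k => Submodule.span ℝ (e '' Set.Ioc (n k) (n (k+1))) with hV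
  have hVfd : ∀ k, FiniteDimensional ℝ (V k) := fun k =>
    FiniteDimensional.span_of_finite ℝ ((Set.finite_Ioc _ _).image e)
  have hyV : ∀ p k, y p k ∈ V k := by
    intro p k
    refine Submodule.sum_mem _ (fun j hj => Submodule.smul_mem _ _ (Submodule.subset_span ?_))
    exact ⟨j, by simpa using hj, rfl⟩
  set B : ℕ → Set E := fun k => (fun v : V k => (v : E)) '' Metric.closedBall 0 (C * r ^ k) with hB
  have hBc : ∀ k, IsCompact (B k) := by
    intro k
    haveI := hVfd k
    exact (isCompact_closedBall _ _).image continuous_subtype_val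
  have hyB : ∀ p k, y p k ∈ B k := by
    intro p k
    refine ⟨⟨y p k, hyV p k⟩, ?_, rfl⟩
    simpa [Metric.mem_closedBall, dist_zero_right] using hbound p k
  -- the compact product set
  set S : Set (ℕ → E) := Set.univ.pi (fun k => B k) with hSdef
  have hScomp : IsCompact S := isCompact_univ_pi hBc
  have hSnorm : ∀ z ∈ S, ∀ k, ‖z k‖ ≤ C * r ^ k := by
    intro z hz k
    obtain ⟨v, hv, hvz⟩ := hz k (Set.mem_univ k)
    rw [← hvz]
    simpa [dist_zero_right] using Metric.mem_closedBall.mp hv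
  have hgeo : Summable (fun k : ℕ => C * r ^ k) :=
    (summable_geometric_of_lt_one hr0.le hr1).mul_left C
  have hzsum : ∀ z ∈ S, Summable z := fun z hz =>
    Summable.of_norm_bounded hgeo (hSnorm z hz)
  -- uniform tail bound
  have htailbd : ∀ z ∈ S, ∀ N : ℕ,
      ‖(∑' k, z k) - ∑ k ∈ Finset.range N, z k‖ ≤ C * r ^ N * (1 - r)⁻¹ := by
    intro z hz N
    have hsum := hzsum z hz
    have hsplit := Summable.sum_add_tsum_nat_add N hsum
    have hdiff : (∑' k, z k) - ∑ k ∈ Finset.range N, z k = ∑' i, z (i + N) := by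
      rw [← hsplit]; abel
    rw [hdiff]
    have hsn : Summable (fun i : ℕ => ‖z (i + N)‖) := by
      refine Summable.of_nonneg_of_le (fun i => norm_nonneg _)
        (fun i => hSnorm z hz (i + N)) ?_
      have : (fun i : ℕ => C * r ^ (i + N)) = fun i : ℕ => (C * r ^ N) * r ^ i := by
        funext i; rw [pow_add]; ring
      rw [this]
      exact (summable_geometric_of_lt_one hr0.le hr1).mul_left _
    refine le_trans (norm_tsum_le_tsum_norm hsn) ?_
    have hle : ∀ i : ℕ, ‖z (i + N)‖ ≤ (C * r ^ N) * r ^ i := by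
      intro i
      have := hSnorm z hz (i + N)
      rw [pow_add] at this; nlinarith [this]
    have hsum2 : Summable (fun i : ℕ => (C * r ^ N) * r ^ i) :=
      (summable_geometric_of_lt_one hr0.le hr1).mul_left _
    refine le_trans (Summable.tsum_le_tsum hle hsn hsum2) ?_
    rw [show (∑' i : ℕ, C * r ^ N * r ^ i) = (C * r ^ N) * ∑' i : ℕ, r ^ i from tsum_mul_left,
      tsum_geometric_of_lt_one hr0.le hr1]
  -- uniform convergence of partial sums on S
  have hU : TendstoUniformlyOn (fun (N : ℕ) (z : ℕ → E) => ∑ k ∈ Finset.range N, z k)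
      (fun z => ∑' k, z k) atTop S := by
    rw [Metric.tendstoUniformlyOn_iff]
    intro ε hε
    have hto : Tendsto (fun N : ℕ => C * r ^ N * (1 - r)⁻¹) atTop (𝓝 0) := by
      have h0 := tendsto_pow_atTop_nhds_zero_of_lt_one hr0.le hr1
      have := (h0.const_mul C).mul_const (1 - r)⁻¹
      simpa using this
    filter_upwards [hto.eventually (gt_mem_nhds hε)] with N hN z hz
    rw [dist_eq_norm]
    exact lt_of_le_of_lt (htailbd z hz N) hN
  have hFcont : ContinuousOn (fun z : ℕ → E => ∑' k, z k) S :=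
    hU.continuousOn (Filter.Eventually.of_forall fun N =>
      (continuous_finset_sum _ fun k _ => continuous_apply k).continuousOn).frequently
  have hK : IsCompact ((fun z : ℕ → E => ∑' k, z k) '' S) :=
    hScomp.image_of_continuousOn hFcont
  have hxK : ∀ p, x p ∈ (fun z : ℕ → E => ∑' k, z k) '' S := by
    intro p
    refine ⟨fun k => y p k, Set.mem_univ_pi.mpr (hyB p), ?_⟩
    exact (hrep p).tsum_eq
  obtain ⟨l, _, φ, hφ, hconv⟩ := hK.tendsto_subseq hxK
  exact ⟨φ, hφ, l, hconv⟩
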